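/- arXiv:1205.0835 — 3 statements merged into one kernel-verified Lean document; each statement's English description precedes it below -/
import Mathlib

section
/- Let C be an N×N Hermitian positive semidefinite complex matrix, D an N×N Hermitian positive definite complex matrix, h ∈ ℂ^N, σ² > 0 and P > 0. Then the supremum over {a ∈ ℂ^N : a^H D a ≤ P} of the objective |h^H a|²/(a^H C a + σ²) equals the supremum over {a ∈ ℂ^N : a^H D a = P} of |h^H a|²/(a^H (C + (σ²/P) D) a). (For a with a^H D a = P, the denominator a^H (C + (σ²/P) D) a equals a^H C a + σ².) -/
open Matrix ComplexOrder

/-- Cauchy–Schwarz for the sesquilinear form of a PSD matrix. -/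
lemma psd_cauchy_schwarz {N : ℕ} {D : Matrix (Fin N) (Fin N) ℂ} (hD : D.PosSemidef)
    (x y : Fin N → ℂ) :
    ‖star x ⬝ᵥ D *ᵥ y‖ ^ 2 ≤ (star x ⬝ᵥ D *ᵥ x).re * (star y ⬝ᵥ D *ᵥ y).re := by
  letI c : PreInnerProductSpace.Core ℂ (Fin N → ℂ) :=
    { inner := fun x y => dotProduct (star x) (D *ᵥ y)
      conj_inner_symm := fun x y => by
        show (starRingEnd ℂ) (star y ⬝ᵥ D *ᵥ x) = star x ⬝ᵥ D *ᵥ y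
        rw [star_dotProduct, starRingEnd_apply, star_star, star_mulVec, dotProduct_mulVec,
          hD.isHermitian.eq]
      re_inner_nonneg := fun x => hD.re_dotProduct_nonneg x
      add_left := by simp only [star_add, add_dotProduct, forall_const, implies_true]
      smul_left := fun x y r => by
        show star (r • x) ⬝ᵥ D *ᵥ y = (starRingEnd ℂ) r * (star x ⬝ᵥ D *ᵥ y)
        rw [← smul_eq_mul, ← smul_dotProduct, starRingEnd_apply, ← star_smul] }
  letI : Inner ℂ (Fin N → ℂ) := c.toInner
  have h1 := @InnerProductSpace.Core.inner_mul_inner_self_le ℂ (Fin N → ℂ) _ _ _ c x y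
  have h2 : (inner ℂ y x : ℂ) = starRingEnd ℂ (inner ℂ x y) := (c.conj_inner_symm y x).symm
  have h3 : ‖(inner ℂ y x : ℂ)‖ = ‖(inner ℂ x y : ℂ)‖ := by rw [h2, RCLike.norm_conj]
  rw [h3, ← sq] at h1
  exact h1

lemma quad_smul {N : ℕ} (M : Matrix (Fin N) (Fin N) ℂ) (t : ℝ) (a : Fin N → ℂ) :
    (star ((t : ℂ) • a) ⬝ᵥ M *ᵥ ((t : ℂ) • a)).re = t ^ 2 * (star a ⬝ᵥ M *ᵥ a).re := by
  have e : star ((t : ℂ) • a) ⬝ᵥ M *ᵥ ((t : ℂ) • a)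
      = ((t * t : ℝ) : ℂ) * (star a ⬝ᵥ M *ᵥ a) := by
    rw [star_smul, mulVec_smul, smul_dotProduct, dotProduct_smul]
    simp [smul_eq_mul, Complex.conj_ofReal]
    ring
  rw [e, Complex.re_ofReal_mul, ← sq]

lemma num_smul {N : ℕ} (h : Fin N → ℂ) (t : ℝ) (a : Fin N → ℂ) :
    ‖star h ⬝ᵥ ((t : ℂ) • a)‖ ^ 2 = t ^ 2 * ‖star h ⬝ᵥ a‖ ^ 2 := by
  rw [dotProduct_smul]
  simp [norm_smul, mul_pow, Complex.norm_real, Real.norm_eq_abs, sq_abs]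

lemma denom_eq {N : ℕ} (C D : Matrix (Fin N) (Fin N) ℂ) (r : ℝ) (a : Fin N → ℂ) :
    (star a ⬝ᵥ (C + ((r : ℝ) : ℂ) • D) *ᵥ a).re
      = (star a ⬝ᵥ C *ᵥ a).re + r * (star a ⬝ᵥ D *ᵥ a).re := by
  rw [add_mulVec, dotProduct_add, smul_mulVec, dotProduct_smul, Complex.add_re,
    smul_eq_mul, Complex.re_ofReal_mul]

/-- The supremum of `|h^H a|² / (a^H C a + σ²)` over the power ball
`{a : a^H D a ≤ P}` equals the supremum of `|h^H a|² / (a^H (C + (σ²/P) D) a)` over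
the power sphere `{a : a^H D a = P}`. -/
theorem sup_rayleigh_ball_eq_sup_sphere
    (N : ℕ) (C D : Matrix (Fin N) (Fin N) ℂ) (hC : C.PosSemidef) (hD : D.PosDef)
    (h : Fin N → ℂ) (σ2 P : ℝ) (hσ2 : 0 < σ2) (hP : 0 < P) :
    sSup {x : ℝ | ∃ a : Fin N → ℂ, (star a ⬝ᵥ D *ᵥ a).re ≤ P ∧
        x = ‖star h ⬝ᵥ a‖ ^ 2 / ((star a ⬝ᵥ C *ᵥ a).re + σ2)} =
    sSup {x : ℝ | ∃ a : Fin N → ℂ, (star a ⬝ᵥ D *ᵥ a).re = P ∧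
        x = ‖star h ⬝ᵥ a‖ ^ 2 / (star a ⬝ᵥ (C + ((σ2 / P : ℝ) : ℂ) • D) *ᵥ a).re} := by
  classical
  set S1 := {x : ℝ | ∃ a : Fin N → ℂ, (star a ⬝ᵥ D *ᵥ a).re ≤ P ∧
        x = ‖star h ⬝ᵥ a‖ ^ 2 / ((star a ⬝ᵥ C *ᵥ a).re + σ2)} with hS1def
  set S2 := {x : ℝ | ∃ a : Fin N → ℂ, (star a ⬝ᵥ D *ᵥ a).re = P ∧
        x = ‖star h ⬝ᵥ a‖ ^ 2 / (star a ⬝ᵥ (C + ((σ2 / P : ℝ) : ℂ) • D) *ᵥ a).re} with hS2def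
  -- representation of the numerator through the D-inner product
  have hrep : ∀ a : Fin N → ℂ, star h ⬝ᵥ a = star (D⁻¹ *ᵥ h) ⬝ᵥ D *ᵥ a := by
    intro a
    rw [star_mulVec, dotProduct_mulVec, vecMul_vecMul, conjTranspose_nonsing_inv,
      hD.isHermitian.eq, nonsing_inv_mul D ((Matrix.isUnit_iff_isUnit_det D).mp hD.isUnit),
      vecMul_one]
  set K : ℝ := (star (D⁻¹ *ᵥ h) ⬝ᵥ D *ᵥ (D⁻¹ *ᵥ h)).re with hKdef
  have hK : 0 ≤ K := hD.posSemidef.re_dotProduct_nonneg _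
  have key : ∀ a : Fin N → ℂ, ‖star h ⬝ᵥ a‖ ^ 2 ≤ K * (star a ⬝ᵥ D *ᵥ a).re := by
    intro a
    rw [hrep a]
    exact psd_cauchy_schwarz hD.posSemidef _ a
  -- bounds
  have bdd1 : BddAbove S1 := by
    refine ⟨K * P / σ2, ?_⟩
    rintro x ⟨a, ha, rfl⟩
    have hca : 0 ≤ (star a ⬝ᵥ C *ᵥ a).re := hC.re_dotProduct_nonneg a
    have hn : ‖star h ⬝ᵥ a‖ ^ 2 ≤ K * P :=
      (key a).trans (mul_le_mul_of_nonneg_left ha hK)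
    exact div_le_div₀ (mul_nonneg hK hP.le) hn hσ2 (by linarith)
  have sub : S2 ⊆ S1 := by
    rintro x ⟨a, ha, rfl⟩
    exact ⟨a, ha.le, by rw [denom_eq, ha, div_mul_cancel₀ σ2 hP.ne']⟩
  have bdd2 : BddAbove S2 := bdd1.mono sub
  have h0mem : (0 : ℝ) ∈ S1 := by
    refine ⟨0, by simp [hP.le], by simp⟩
  have hsup1 : 0 ≤ sSup S1 := le_csSup bdd1 h0mem
  by_cases hNz : ∃ a : Fin N → ℂ, a ≠ 0
  · obtain ⟨v, hv⟩ := hNz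
    have hqv : 0 < (star v ⬝ᵥ D *ᵥ v).re := hD.re_dotProduct_pos hv
    -- a point on the sphere
    set t0 : ℝ := Real.sqrt (P / (star v ⬝ᵥ D *ᵥ v).re) with ht0def
    have ht0sq : t0 ^ 2 = P / (star v ⬝ᵥ D *ᵥ v).re :=
      Real.sq_sqrt (div_nonneg hP.le hqv.le)
    have hb0 : (star ((t0 : ℂ) • v) ⬝ᵥ D *ᵥ ((t0 : ℂ) • v)).re = P := by
      rw [quad_smul, ht0sq, div_mul_cancel₀ P hqv.ne']
    have hb0mem : (‖star h ⬝ᵥ ((t0 : ℂ) • v)‖ ^ 2 /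
        (star ((t0 : ℂ) • v) ⬝ᵥ (C + ((σ2 / P : ℝ) : ℂ) • D) *ᵥ ((t0 : ℂ) • v)).re) ∈ S2 :=
      ⟨(t0 : ℂ) • v, hb0, rfl⟩
    have hb0nonneg : 0 ≤ ‖star h ⬝ᵥ ((t0 : ℂ) • v)‖ ^ 2 /
        (star ((t0 : ℂ) • v) ⬝ᵥ (C + ((σ2 / P : ℝ) : ℂ) • D) *ᵥ ((t0 : ℂ) • v)).re := by
      apply div_nonneg (sq_nonneg _)
      rw [denom_eq, hb0, div_mul_cancel₀ σ2 hP.ne']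
      have hcc : (0:ℝ) ≤ (star ((t0 : ℂ) • v) ⬝ᵥ C *ᵥ ((t0 : ℂ) • v)).re :=
        hC.re_dotProduct_nonneg _
      linarith
    have hsup2 : 0 ≤ sSup S2 := hb0nonneg.trans (le_csSup bdd2 hb0mem)
    apply le_antisymm
    · apply Real.sSup_le _ hsup2
      rintro x ⟨a, ha, rfl⟩
      by_cases ha0 : a = 0
      · subst ha0
        have e : ‖star h ⬝ᵥ (0 : Fin N → ℂ)‖ ^ 2 = 0 := by simp
        rw [e, zero_div]
        exact hsup2
      · have hqa : 0 < (star a ⬝ᵥ D *ᵥ a).re := hD.re_dotProduct_pos ha0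
        set t : ℝ := Real.sqrt (P / (star a ⬝ᵥ D *ᵥ a).re) with htdef
        have htsq : t ^ 2 = P / (star a ⬝ᵥ D *ᵥ a).re :=
          Real.sq_sqrt (div_nonneg hP.le hqa.le)
        have ht1 : 1 ≤ t ^ 2 := by
          rw [htsq]
          exact (one_le_div hqa).mpr ha
        have hb : (star ((t : ℂ) • a) ⬝ᵥ D *ᵥ ((t : ℂ) • a)).re = P := by
          rw [quad_smul, htsq, div_mul_cancel₀ P hqa.ne']
        have hmem : (‖star h ⬝ᵥ ((t : ℂ) • a)‖ ^ 2 /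
            (star ((t : ℂ) • a) ⬝ᵥ (C + ((σ2 / P : ℝ) : ℂ) • D) *ᵥ ((t : ℂ) • a)).re) ∈ S2 :=
          ⟨(t : ℂ) • a, hb, rfl⟩
        refine le_trans ?_ (le_csSup bdd2 hmem)
        rw [denom_eq, hb, div_mul_cancel₀ σ2 hP.ne', num_smul, quad_smul]
        have hca : 0 ≤ (star a ⬝ᵥ C *ᵥ a).re := hC.re_dotProduct_nonneg a
        have hn : 0 ≤ ‖star h ⬝ᵥ a‖ ^ 2 := sq_nonneg _
        rw [div_le_div_iff₀ (by linarith) (by nlinarith)]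
        nlinarith [mul_nonneg (mul_nonneg hn hσ2.le) (sub_nonneg.2 ht1)]
    · apply Real.sSup_le _ hsup1
      rintro x hx
      exact le_csSup bdd1 (sub hx)
  · push_neg at hNz
    have e2 : S2 = ∅ := by
      rw [Set.eq_empty_iff_forall_notMem]
      rintro x ⟨a, ha, -⟩
      rw [hNz a] at ha
      simp at ha
      exact hP.ne' ha.symm
    have e1 : S1 = {0} := by
      ext x
      constructor
      · rintro ⟨a, -, rfl⟩
        rw [hNz a]
        simp
      · rintro rfl
        exact h0mem
    rw [e1, e2, Real.sSup_empty, csSup_singleton]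
end

section
/- Let C be an N×N Hermitian positive semidefinite complex matrix, D an N×N Hermitian positive definite complex matrix, h ∈ ℂ^N nonzero, σ² > 0 and P > 0. If a* maximizes f(a) = |h^H a|²/(a^H C a + σ²) over the set {a ∈ ℂ^N : a^H D a ≤ P}, then the power constraint is active at the optimum: a*^H D a* = P. -/
open Matrix ComplexOrder

lemma quad_smul_re (N : ℕ) (M : Matrix (Fin N) (Fin N) ℂ) (t : ℝ) (a : Fin N → ℂ) :
    (star ((t:ℂ) • a) ⬝ᵥ M *ᵥ ((t:ℂ) • a)).re = t ^ 2 * (star a ⬝ᵥ M *ᵥ a).re := by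
  have : star ((t:ℂ) • a) ⬝ᵥ M *ᵥ ((t:ℂ) • a) = ((t^2 : ℝ):ℂ) * (star a ⬝ᵥ M *ᵥ a) := by
    simp [star_smul, Matrix.mulVec_smul, smul_dotProduct, dotProduct_smul, smul_eq_mul]
    ring
  rw [this, Complex.re_ofReal_mul]

lemma norm_dot_smul (N : ℕ) (h a : Fin N → ℂ) (t : ℝ) :
    ‖star h ⬝ᵥ ((t:ℂ) • a)‖ = |t| * ‖star h ⬝ᵥ a‖ := by
  simp [dotProduct_smul, smul_eq_mul, Complex.norm_real]

/-- If `a*` maximizes `|h^H a|² / (a^H C a + σ²)` over `{a : a^H D a ≤ P}` (with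
`C ⪰ 0`, `D ≻ 0`, `h ≠ 0`, `σ² > 0`, `P > 0`), then the power constraint is active
at the optimum: `a*^H D a* = P`. -/
theorem power_constraint_active_at_optimum
    (N : ℕ) (C D : Matrix (Fin N) (Fin N) ℂ) (hC : C.PosSemidef) (hD : D.PosDef)
    (h : Fin N → ℂ) (hh : h ≠ 0) (σ2 P : ℝ) (hσ2 : 0 < σ2) (hP : 0 < P)
    (astar : Fin N → ℂ) (hfeas : (star astar ⬝ᵥ D *ᵥ astar).re ≤ P)
    (hopt : ∀ a : Fin N → ℂ, (star a ⬝ᵥ D *ᵥ a).re ≤ P →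
      ‖star h ⬝ᵥ a‖ ^ 2 / ((star a ⬝ᵥ C *ᵥ a).re + σ2) ≤
        ‖star h ⬝ᵥ astar‖ ^ 2 / ((star astar ⬝ᵥ C *ᵥ astar).re + σ2)) :
    (star astar ⬝ᵥ D *ᵥ astar).re = P := by
  set c := (star astar ⬝ᵥ C *ᵥ astar).re with hc
  have hc0 : 0 ≤ c := by simpa [hc] using hC.re_dotProduct_nonneg astar
  set L := ‖star h ⬝ᵥ astar‖ ^ 2 with hLdef
  -- Step 1: the optimal value is strictly positive, so L > 0.
  have hdh : 0 < (star h ⬝ᵥ D *ᵥ h).re := by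
    simpa using hD.re_dotProduct_pos hh
  set dh := (star h ⬝ᵥ D *ᵥ h).re with hdhdef
  set ε : ℝ := Real.sqrt (P / dh) with hε
  have hε2 : ε ^ 2 = P / dh := Real.sq_sqrt (le_of_lt (div_pos hP hdh))
  have hεpos : 0 < ε := Real.sqrt_pos.mpr (div_pos hP hdh)
  have hfeas0 : (star ((ε:ℂ) • h) ⬝ᵥ D *ᵥ ((ε:ℂ) • h)).re ≤ P := by
    rw [quad_smul_re, ← hdhdef, hε2, div_mul_cancel₀ _ (ne_of_gt hdh)]
  have hnum0 : 0 < ‖star h ⬝ᵥ ((ε:ℂ) • h)‖ ^ 2 := by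
    rw [norm_dot_smul]
    have hne : star h ⬝ᵥ h ≠ 0 := fun hz => hh (dotProduct_star_self_eq_zero.mp hz)
    have : 0 < ‖star h ⬝ᵥ h‖ := norm_pos_iff.mpr hne
    positivity
  have hcc0 : (0:ℝ) < (star ((ε:ℂ) • h) ⬝ᵥ C *ᵥ ((ε:ℂ) • h)).re + σ2 := by
    have := hC.re_dotProduct_nonneg ((ε:ℂ) • h)
    simp only [RCLike.re_to_complex] at this
    linarith
  have hL : 0 < L := by
    have h1 := hopt ((ε:ℂ) • h) hfeas0
    have h2 : 0 < ‖star h ⬝ᵥ ((ε:ℂ) • h)‖ ^ 2 / ((star ((ε:ℂ) • h) ⬝ᵥ C *ᵥ ((ε:ℂ) • h)).re + σ2) :=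
      div_pos hnum0 hcc0
    have h3 : 0 < L / (c + σ2) := lt_of_lt_of_le h2 h1
    have h4 : 0 < c + σ2 := by linarith
    rcases div_pos_iff.mp h3 with ⟨h5, _⟩ | ⟨_, h6⟩
    · exact h5
    · linarith
  -- astar ≠ 0
  have hastar : astar ≠ 0 := by
    intro hz
    rw [hLdef, hz] at hL
    simp at hL
  set Q := (star astar ⬝ᵥ D *ᵥ astar).re with hQ
  have hQpos : 0 < Q := by simpa [hQ] using hD.re_dotProduct_pos hastar
  -- Step 2: assume Q < P, scale up to get a contradiction.
  by_contra hne
  have hlt : Q < P := lt_of_le_of_ne hfeas hne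
  set t : ℝ := Real.sqrt (P / Q) with ht
  have ht2 : t ^ 2 = P / Q := Real.sq_sqrt (le_of_lt (div_pos hP hQpos))
  have ht2gt : 1 < t ^ 2 := by
    rw [ht2]
    exact (one_lt_div hQpos).mpr hlt
  have hfeas1 : (star ((t:ℂ) • astar) ⬝ᵥ D *ᵥ ((t:ℂ) • astar)).re ≤ P := by
    rw [quad_smul_re, ← hQ, ht2, div_mul_cancel₀ _ (ne_of_gt hQpos)]
  have hkey := hopt ((t:ℂ) • astar) hfeas1
  rw [norm_dot_smul, quad_smul_re, ← hc, mul_pow, sq_abs, ← hLdef] at hkey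
  -- hkey : t^2 * L / (t^2 * c + σ2) ≤ L / (c + σ2)
  have hd1 : 0 < c + σ2 := by linarith
  have hd2 : 0 < t ^ 2 * c + σ2 := by nlinarith
  rw [div_le_div_iff₀ hd2 hd1] at hkey
  nlinarith [mul_pos (mul_pos (sub_pos.mpr ht2gt) hL) hσ2]
end

section
/- Let N ≥ 1, let X_1, …, X_N be independent real random variables, each exponentially distributed with rate 1 (mean 1). Let λ_1, …, λ_N be pairwise distinct real numbers with λ_1 > 0 and λ_i < 0 for all i ≥ 2, and let c > 0. Then the probability that Σ_{i=1}^N λ_i X_i < c equals 1 − (λ_1^{N−1} / Π_{l=2}^{N} (λ_1 − λ_l)) · e^{−c/λ_1}. -/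
open MeasureTheory ProbabilityTheory

open Real Set

lemma expMeasure_apply {s : Set ℝ} (hs : MeasurableSet s) :
    expMeasure 1 s = ∫⁻ x in s, exponentialPDF 1 x := by
  rw [expMeasure, gammaMeasure, withDensity_apply _ hs]
  rfl

lemma expMeasure_singleton (t : ℝ) : expMeasure 1 {t} = 0 := by
  rw [expMeasure_apply (measurableSet_singleton t),
    setLIntegral_measure_zero _ _ (measure_singleton t)]

lemma expMeasure_Ici {t : ℝ} (ht : 0 ≤ t) :
    expMeasure 1 (Ici t) = ENNReal.ofReal (Real.exp (-t)) := by
  have hprob : IsProbabilityMeasure (expMeasure (1:ℝ)) :=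
    isProbabilityMeasure_expMeasure one_pos
  have hIic : expMeasure 1 (Iic t) = ENNReal.ofReal (1 - Real.exp (-t)) := by
    rw [expMeasure_apply measurableSet_Iic, lintegral_exponentialPDF_eq_antiDeriv one_pos,
      if_pos ht, one_mul]
  have hIio : expMeasure 1 (Iio t) = ENNReal.ofReal (1 - Real.exp (-t)) := by
    have : Iic t = Iio t ∪ {t} := (Iio_union_right).symm
    rw [this] at hIic
    rw [← hIic]
    refine le_antisymm (measure_mono (μ := expMeasure 1) (subset_union_left : Iio t ⊆ Iio t ∪ {t})) ?_
    calc expMeasure 1 (Iio t ∪ {t}) ≤ expMeasure 1 (Iio t) + expMeasure 1 {t} :=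
          measure_union_le _ _
      _ = expMeasure 1 (Iio t) := by rw [expMeasure_singleton, add_zero]
  have := measure_compl (measurableSet_Iio (a := t)) (measure_ne_top (expMeasure 1) _)
  rw [compl_Iio, hIio, measure_univ] at this
  rw [this]
  have h1 : Real.exp (-t) ≤ 1 := Real.exp_le_one_iff.mpr (by linarith)
  have h2 : ENNReal.ofReal (1 - Real.exp (-t)) = 1 - ENNReal.ofReal (Real.exp (-t)) := by
    rw [ENNReal.ofReal_sub _ (Real.exp_pos _).le, ENNReal.ofReal_one]
  rw [h2, ENNReal.sub_sub_cancel ENNReal.one_ne_top (ENNReal.ofReal_le_one.mpr h1)]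

lemma exp_step_integral {a b c P : ℝ} (ha : 0 < a) (hb : 0 < b) (hc : 0 ≤ c) (hP : 0 ≤ P) :
    ∫⁻ t, ENNReal.ofReal (Real.exp (-(c + a * t) / b) * P) ∂(expMeasure 1)
      = ENNReal.ofReal (Real.exp (-c / b) * P * (b / (b + a))) := by
  set k : ℝ := 1 + a / b with hk
  have hkpos : 0 < k := by positivity
  set C : ℝ := Real.exp (-c / b) * P with hC
  have hmeasg : Measurable fun t : ℝ => ENNReal.ofReal (Real.exp (-(c + a * t) / b) * P) := by
    fun_prop
  have hpdf : Measurable (exponentialPDF 1) :=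
    (measurable_exponentialPDFReal 1).ennreal_ofReal
  rw [show expMeasure (1:ℝ) = volume.withDensity (exponentialPDF 1) from rfl,
    lintegral_withDensity_eq_lintegral_mul _ hpdf hmeasg]
  have hfun : ∀ t : ℝ, (exponentialPDF 1 * fun t => ENNReal.ofReal
        (Real.exp (-(c + a * t) / b) * P)) t
      = (Ici (0:ℝ)).indicator (fun t => ENNReal.ofReal (C * Real.exp (-(k * t)))) t := by
    intro t
    simp only [Pi.mul_apply, indicator]
    split_ifs with h
    · rw [exponentialPDF_of_nonneg h, ← ENNReal.ofReal_mul (by positivity)]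
      congr 1
      have : (1:ℝ) * Real.exp (-(1 * t)) * (Real.exp (-(c + a * t) / b) * P)
          = (Real.exp (-(1*t)) * Real.exp (-(c + a * t) / b)) * P := by ring
      rw [this, ← Real.exp_add, hC, hk]
      have : -(1*t) + -(c + a * t) / b = -c / b + -((1 + a / b) * t) := by
        field_simp; ring
      rw [this, Real.exp_add]
      ring
    · rw [exponentialPDF_of_neg (not_le.mp h), zero_mul]
  rw [lintegral_congr hfun, lintegral_indicator measurableSet_Ici,
    setLIntegral_congr (Ioi_ae_eq_Ici (a := (0:ℝ))).symm]
  have hint : IntegrableOn (fun t : ℝ => C * Real.exp (-(k * t))) (Ioi 0) :=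
    by simpa [neg_mul, IntegrableOn] using (exp_neg_integrableOn_Ioi 0 hkpos).const_mul C
  rw [← ofReal_integral_eq_lintegral_ofReal hint
      (Filter.Eventually.of_forall fun t => by positivity)]
  congr 1
  rw [MeasureTheory.integral_const_mul]
  have := integral_comp_mul_left_Ioi (fun u : ℝ => Real.exp (-u)) 0 hkpos
  simp only [mul_zero, neg_zero, smul_eq_mul] at this
  rw [this, integral_exp_neg_Ioi, neg_zero, Real.exp_zero, mul_one]
  have hk' : k⁻¹ = b / (b + a) := by
    rw [hk]; field_simp
  rw [hk', hC]

lemma key_lemma (b : ℝ) (hb : 0 < b) :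
    ∀ (n : ℕ) (a : Fin n → ℝ), (∀ i, 0 < a i) → ∀ c : ℝ, 0 ≤ c →
    (Measure.pi fun _ : Fin (n + 1) => expMeasure (1:ℝ))
        {x : Fin (n + 1) → ℝ | c ≤ b * x 0 - ∑ i, a i * x i.succ}
      = ENNReal.ofReal (Real.exp (-c / b) * ∏ i, b / (b + a i)) := by
  intro n
  induction n with
  | zero =>
    intro a ha c hc
    have hMP := measurePreserving_funUnique (expMeasure (1:ℝ)) (Fin 1)
    have hset : {x : Fin 1 → ℝ | c ≤ b * x 0 - ∑ i : Fin 0, a i * x i.succ}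
        = (MeasurableEquiv.funUnique (Fin 1) ℝ) ⁻¹' (Ici (c / b)) := by
      ext x
      simp only [mem_setOf_eq, Finset.univ_eq_empty, Finset.sum_empty, sub_zero, mem_preimage,
        MeasurableEquiv.funUnique_apply, mem_Ici, div_le_iff₀ hb, Fin.default_eq_zero]
      constructor <;> intro h <;> linarith
    erw [hset, hMP.measure_preimage measurableSet_Ici.nullMeasurableSet,
      expMeasure_Ici (by positivity)]
    simp [neg_div]
  | succ m ih =>
    intro a ha c hc
    haveI : IsProbabilityMeasure (expMeasure (1:ℝ)) := isProbabilityMeasure_expMeasure one_pos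
    set P : ℝ := ∏ i : Fin m, b / (b + a i.castSucc) with hP
    have hPpos : 0 < P := Finset.prod_pos fun i _ => by
      have := ha i.castSucc; positivity
    have hMP := measurePreserving_piFinSuccAbove
      (fun _ : Fin (m + 2) => expMeasure (1:ℝ)) (Fin.last (m + 1))
    set E' : Set (ℝ × (Fin (m + 1) → ℝ)) :=
      {p | c + a (Fin.last m) * p.1 ≤ b * p.2 0 - ∑ i : Fin m, a i.castSucc * p.2 i.succ}
      with hE'def
    have hE' : MeasurableSet E' := by
      apply measurableSet_le
      · exact measurable_const.add (measurable_fst.const_mul _)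
      · refine ((((measurable_pi_apply (0 : Fin (m + 1))).comp
            (measurable_snd : Measurable fun p : ℝ × (Fin (m + 1) → ℝ) => p.2)).const_mul b).sub
          (Finset.measurable_sum Finset.univ fun i _ => ?_))
        exact ((measurable_pi_apply (i.succ)).comp
          (measurable_snd : Measurable fun p : ℝ × (Fin (m + 1) → ℝ) => p.2)).const_mul _
    have hset : {x : Fin (m + 2) → ℝ | c ≤ b * x 0 - ∑ i : Fin (m + 1), a i * x i.succ}
        = (MeasurableEquiv.piFinSuccAbove (fun _ : Fin (m + 2) => ℝ) (Fin.last (m + 1)))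
            ⁻¹' E' := by
      ext x
      simp only [mem_setOf_eq, mem_preimage, MeasurableEquiv.piFinSuccAbove_apply, hE'def,
        Fin.insertNthEquiv_symm_apply, Fin.removeNth, Fin.succAbove_last]
      rw [Fin.sum_univ_castSucc (f := fun i : Fin (m + 1) => a i * x i.succ)]
      simp only [Fin.succ_last, Fin.succ_castSucc, Fin.castSucc_zero]
      constructor <;> intro h <;> linarith
    rw [hset, hMP.measure_preimage hE'.nullMeasurableSet, Measure.prod_apply hE']
    have hae : ∀ᵐ t ∂(expMeasure (1:ℝ)), 0 ≤ t := by
      rw [ae_iff]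
      have : {t : ℝ | ¬ 0 ≤ t} = Iio 0 := by ext t; simp
      rw [this, expMeasure_apply measurableSet_Iio,
        lintegral_exponentialPDF_of_nonpos le_rfl]
    have hcongr : ∀ᵐ t ∂(expMeasure (1:ℝ)),
        (Measure.pi fun _ : Fin (m + 1) => expMeasure (1:ℝ)) (Prod.mk t ⁻¹' E')
          = ENNReal.ofReal (Real.exp (-(c + a (Fin.last m) * t) / b) * P) := by
      filter_upwards [hae] with t ht
      have hpre : Prod.mk t ⁻¹' E'
          = {y : Fin (m + 1) → ℝ | c + a (Fin.last m) * t
              ≤ b * y 0 - ∑ i : Fin m, a i.castSucc * y i.succ} := rfl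
      rw [hpre, ih (fun i => a i.castSucc) (fun i => ha i.castSucc)
        (c + a (Fin.last m) * t) (by have := (ha (Fin.last m)).le; positivity)]
    rw [lintegral_congr_ae hcongr,
      exp_step_integral (ha (Fin.last m)) hb hc hPpos.le]
    congr 1
    rw [Fin.prod_univ_castSucc (f := fun i : Fin (m + 1) => b / (b + a i)), hP]
    ring

lemma map_eq_pi_exp {Ω : Type*} [MeasurableSpace Ω] (μ : Measure Ω) [IsProbabilityMeasure μ]
    {n : ℕ} (X : Fin (n + 1) → Ω → ℝ) (hmeas : ∀ i, Measurable (X i))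
    (hindep : iIndepFun X μ)
    (hdist : ∀ i, μ.map (X i) = expMeasure 1) :
    μ.map (fun ω i => X i ω) = Measure.pi fun _ : Fin (n + 1) => expMeasure (1:ℝ) := by
  haveI : IsProbabilityMeasure (expMeasure (1:ℝ)) := isProbabilityMeasure_expMeasure one_pos
  refine (Measure.pi_eq (μ := fun _ : Fin (n + 1) => expMeasure (1:ℝ)) fun s hs => ?_).symm
  rw [Measure.map_apply (measurable_pi_lambda _ hmeas) (MeasurableSet.univ_pi hs)]
  have hpre : (fun ω => fun i => X i ω) ⁻¹' (Set.pi univ s) = ⋂ i ∈ Finset.univ, X i ⁻¹' s i := by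
    ext ω; simp [Set.mem_pi]
  rw [hpre, hindep.measure_inter_preimage_eq_mul Finset.univ (fun i _ => hs i)]
  exact Finset.prod_congr rfl fun i _ => by rw [← hdist i, Measure.map_apply (hmeas i) (hs i)]


/-- Closed-form outage probability: for independent unit-rate exponential random
variables `X₁,…,X_N` (here `N = n+1 ≥ 1`) and pairwise distinct weights `λᵢ` with
`λ₁ > 0` and `λᵢ < 0` for `i ≥ 2`, and any `c > 0`,
`Pr(Σ λᵢ Xᵢ < c) = 1 − (λ₁^{N−1}/Π_{l≥2}(λ₁−λ_l)) e^{−c/λ₁}`. -/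
theorem outage_probability_weighted_exponentials
    (n : ℕ) (Ω : Type*) [MeasurableSpace Ω] (μ : Measure Ω) [IsProbabilityMeasure μ]
    (X : Fin (n + 1) → Ω → ℝ) (hmeas : ∀ i, Measurable (X i))
    (hindep : iIndepFun X μ)
    (hdist : ∀ i, μ.map (X i) = expMeasure 1)
    (lam : Fin (n + 1) → ℝ) (hinj : Function.Injective lam)
    (hpos : 0 < lam 0) (hneg : ∀ i : Fin (n + 1), i ≠ 0 → lam i < 0)
    (c : ℝ) (hc : 0 < c) :
    (μ {ω | ∑ i, lam i * X i ω < c}).toReal =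
      1 - lam 0 ^ n / (∏ l ∈ Finset.univ.erase 0, (lam 0 - lam l)) *
        Real.exp (-c / lam 0) := by
  haveI : IsProbabilityMeasure (expMeasure (1:ℝ)) := isProbabilityMeasure_expMeasure one_pos
  haveI : IsProbabilityMeasure (Measure.pi fun _ : Fin (n + 1) => expMeasure (1:ℝ)) := by
    infer_instance
  set b : ℝ := lam 0 with hbdef
  set a : Fin n → ℝ := fun i => -(lam i.succ) with hadef
  have ha : ∀ i, 0 < a i := fun i => by
    have := hneg i.succ (Fin.succ_ne_zero i); simp [hadef]; linarith
  have hsum : ∀ x : Fin (n + 1) → ℝ,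
      ∑ i, lam i * x i = b * x 0 - ∑ i : Fin n, a i * x i.succ := by
    intro x
    rw [Fin.sum_univ_succ (f := fun i : Fin (n + 1) => lam i * x i)]
    have : ∑ i : Fin n, a i * x i.succ = -∑ i : Fin n, lam i.succ * x i.succ := by
      rw [← Finset.sum_neg_distrib]
      exact Finset.sum_congr rfl fun i _ => by rw [hadef]; ring
    rw [this]; ring
  set S : Set (Fin (n + 1) → ℝ) :=
    {x | c ≤ b * x 0 - ∑ i : Fin n, a i * x i.succ} with hSdef
  have hS : MeasurableSet S := by
    have hmsum : Measurable fun x : Fin (n + 1) → ℝ =>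
        b * x 0 - ∑ i : Fin n, a i * x i.succ := by
      have h0 : Measurable fun x : Fin (n + 1) → ℝ => x 0 := measurable_pi_apply 0
      have hi : ∀ i : Fin n, Measurable fun x : Fin (n + 1) → ℝ => a i * x i.succ :=
        fun i => (measurable_pi_apply i.succ).const_mul _
      exact (h0.const_mul b).sub (Finset.measurable_sum Finset.univ fun i _ => hi i)
    exact measurableSet_le measurable_const hmsum
  have hU : MeasurableSet Sᶜ := hS.compl
  have hevent : {ω | ∑ i, lam i * X i ω < c} = (fun ω (i : Fin (n + 1)) => X i ω) ⁻¹' Sᶜ := by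
    ext ω
    simp only [mem_setOf_eq, mem_preimage, mem_compl_iff, hSdef, mem_setOf_eq, not_le]
    rw [hsum fun i => X i ω]
  have hkey := key_lemma b hpos n a ha c hc.le
  have hmap := map_eq_pi_exp μ X hmeas hindep hdist
  have hμ : μ {ω | ∑ i, lam i * X i ω < c}
      = 1 - ENNReal.ofReal (Real.exp (-c / b) * ∏ i : Fin n, b / (b + a i)) := by
    rw [hevent, ← Measure.map_apply (measurable_pi_lambda _ hmeas) hU, hmap,
      measure_compl hS (measure_ne_top _ _), hkey, measure_univ]
  have hle : ENNReal.ofReal (Real.exp (-c / b) * ∏ i : Fin n, b / (b + a i)) ≤ 1 := by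
    rw [← hkey]; exact prob_le_one
  have hProdPos : 0 < ∏ i : Fin n, b / (b + a i) :=
    Finset.prod_pos fun i _ => by have := ha i; positivity
  rw [hμ, ENNReal.toReal_sub_of_le hle ENNReal.one_ne_top, ENNReal.toReal_one,
    ENNReal.toReal_ofReal (by positivity)]
  have himg : Finset.univ.erase (0 : Fin (n + 1)) = Finset.univ.image Fin.succ := by
    ext l
    simp only [Finset.mem_erase, Finset.mem_univ, and_true, Finset.mem_image, true_and]
    constructor
    · intro hl; exact ⟨l.pred hl, Fin.succ_pred l hl⟩
    · rintro ⟨i, rfl⟩; exact Fin.succ_ne_zero i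
  have hprod2 : ∏ l ∈ Finset.univ.erase (0 : Fin (n + 1)), (lam 0 - lam l)
      = ∏ i : Fin n, (b + a i) := by
    rw [himg, Finset.prod_image (fun i _ j _ h => Fin.succ_injective _ h)]
    exact Finset.prod_congr rfl fun i _ => by rw [hadef]; ring
  rw [hprod2]
  have hprodformula : ∏ i : Fin n, b / (b + a i) = b ^ n / ∏ i : Fin n, (b + a i) := by
    rw [Finset.prod_div_distrib, Finset.prod_const, Finset.card_univ, Fintype.card_fin]
  rw [hprodformula]
  ring
end
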